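/- Let X and Y be simple graphs, each on n vertices. Then the number of edges of the friends-and-strangers graph FS(X,Y) equals |E(X)| · |E(Y)| · (n−2)!. -/

import Mathlib

open SimpleGraph

/-- Adjacency in the friends-and-strangers graph: bijections `σ` and `τ` are adjacent iff there
is an edge `{a, b}` of `X` such that `{σ a, σ b}` is an edge of `Y`, `σ a = τ b`, `σ b = τ a`,
and `σ c = τ c` for every vertex `c` other than `a` and `b`. -/
def fsAdj {α β : Type*} (X : SimpleGraph α) (Y : SimpleGraph β) (σ τ : α ≃ β) : Prop :=
  ∃ a b : α, X.Adj a b ∧ Y.Adj (σ a) (σ b) ∧ σ a = τ b ∧ σ b = τ a ∧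
    ∀ c : α, c ≠ a → c ≠ b → σ c = τ c

/-- The friends-and-strangers graph `FS(X, Y)` of two simple graphs on the same number of
vertices; its vertices are bijections from `V(X)` to `V(Y)`. -/
def FS {α β : Type*} (X : SimpleGraph α) (Y : SimpleGraph β) : SimpleGraph (α ≃ β) where
  Adj := fsAdj X Y
  symm := by
    refine ⟨?_⟩
    rintro σ τ ⟨a, b, hX, hY, h1, h2, h3⟩
    refine ⟨a, b, hX, ?_, h2.symm, h1.symm, fun c hca hcb => (h3 c hca hcb).symm⟩
    rw [← h2, ← h1]
    exact hY.symm
  loopless := by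
    refine ⟨?_⟩
    rintro σ ⟨a, b, hX, hY, h1, _, _⟩
    exact hX.ne (σ.injective h1)

section Aux

open Equiv

variable {α : Type*} [DecidableEq α]

/-- The transposition swapping the two elements of an unordered pair. -/
def swapOf : Sym2 α → Equiv.Perm α :=
  Sym2.lift ⟨fun a b => Equiv.swap a b, fun a b => Equiv.swap_comm a b⟩

@[simp] lemma swapOf_mk (a b : α) : swapOf s(a, b) = Equiv.swap a b := rfl

lemma swapOf_inj {e e' : Sym2 α} (he : ¬ e.IsDiag) (h : swapOf e = swapOf e') : e = e' := by
  induction e using Sym2.ind with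
  | _ a b =>
  induction e' using Sym2.ind with
  | _ c d =>
  have hab : a ≠ b := by simpa using he
  simp only [swapOf_mk] at h
  have ha : Equiv.swap c d a = b := by rw [← h, Equiv.swap_apply_left]
  by_cases hac : a = c
  · subst hac
    have : d = b := by simpa [Equiv.swap_apply_left] using ha
    rw [this]
  · by_cases had : a = d
    · subst had
      have : c = b := by simpa [Equiv.swap_apply_right] using ha
      rw [this, Sym2.eq_swap]
    · rw [Equiv.swap_apply_of_ne_of_ne hac had] at ha
      exact absurd ha hab

/-- A fixed permutation sending `y1 ↦ a` and `y2 ↦ b`. -/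
lemma exists_perm_two {a b y1 y2 : α} (hab : a ≠ b) (hy : y1 ≠ y2) :
    ∃ π : Equiv.Perm α, π y1 = a ∧ π y2 = b := by
  set s := Equiv.swap a y1 with hs
  have hne : s y2 ≠ a := by
    rcases eq_or_ne y2 a with h | h
    · subst h
      rw [hs, Equiv.swap_apply_left]
      exact hy
    · rcases eq_or_ne y2 y1 with h' | h'
      · exact (hy.symm h').elim
      · rw [hs, Equiv.swap_apply_of_ne_of_ne h h']
        exact h
  refine ⟨s.trans (Equiv.swap b (s y2)), ?_, ?_⟩
  · have h1 : s y1 = a := Equiv.swap_apply_right a y1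
    simp only [Equiv.trans_apply, h1]
    exact Equiv.swap_apply_of_ne_of_ne hab hne.symm
  · simp only [Equiv.trans_apply]
    exact Equiv.swap_apply_right _ _

variable [Fintype α]

lemma card_subtype_ne_ne {a b : α} (hab : a ≠ b) :
    Fintype.card {x : α // x ≠ a ∧ x ≠ b} = Fintype.card α - 2 := by
  classical
  rw [Fintype.card_subtype]
  have : (Finset.univ.filter fun x : α => x ≠ a ∧ x ≠ b) = Finset.univ \ {a, b} := by
    ext x; simp [not_or, and_comm]
  rw [this, Finset.card_sdiff_of_subset (Finset.subset_univ _), Finset.card_univ, Finset.card_pair hab]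

/-- The number of permutations with two prescribed (distinct) values. -/
lemma card_fix_two {a b y1 y2 : α} (hab : a ≠ b) (hy : y1 ≠ y2) :
    Nat.card {σ : Equiv.Perm α // σ a = y1 ∧ σ b = y2} =
      Nat.factorial (Fintype.card α - 2) := by
  classical
  obtain ⟨π, hπ1, hπ2⟩ := exists_perm_two hab hy
  have E1 : {σ : Equiv.Perm α // σ a = y1 ∧ σ b = y2} ≃
      {σ : Equiv.Perm α // σ a = a ∧ σ b = b} :=
    { toFun := fun σ => ⟨σ.1.trans π, by simp [Equiv.trans_apply, σ.2.1, σ.2.2, hπ1, hπ2]⟩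
      invFun := fun σ => ⟨σ.1.trans π.symm, by
        constructor
        · rw [Equiv.trans_apply, σ.2.1, ← hπ1, Equiv.symm_apply_apply]
        · rw [Equiv.trans_apply, σ.2.2, ← hπ2, Equiv.symm_apply_apply]⟩
      left_inv := fun σ => Subtype.ext (by ext x; simp)
      right_inv := fun σ => Subtype.ext (by ext x; simp) }
  have E2 : {σ : Equiv.Perm α // σ a = a ∧ σ b = b} ≃
      {f : Equiv.Perm α // ∀ x, ¬(x ≠ a ∧ x ≠ b) → f x = x} := by
    refine Equiv.subtypeEquivRight fun σ => ?_
    constructor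
    · rintro ⟨h1, h2⟩ x hx
      rcases not_and_or.mp hx with h | h
      · rw [not_ne_iff.mp h, h1]
      · rw [not_ne_iff.mp h, h2]
    · intro h
      exact ⟨h a (by simp), h b (by simp)⟩
  have E3 := (Equiv.Perm.subtypeEquivSubtypePerm fun x : α => x ≠ a ∧ x ≠ b).symm
  rw [Nat.card_congr (E1.trans (E2.trans E3)), Nat.card_eq_fintype_card,
    Fintype.card_perm, card_subtype_ne_ne hab]

end Aux

section FSCount

variable {n : ℕ}

lemma fs_adj_swap (X Y : SimpleGraph (Fin n)) (σ : Fin n ≃ Fin n) (e : Sym2 (Fin n))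
    (hX : e ∈ X.edgeSet) (hY : Sym2.map σ e ∈ Y.edgeSet) :
    (FS X Y).Adj σ ((swapOf e).trans σ) := by
  induction e using Sym2.ind with
  | _ a b =>
  rw [SimpleGraph.mem_edgeSet] at hX
  rw [Sym2.map_pair_eq, SimpleGraph.mem_edgeSet] at hY
  refine ⟨a, b, hX, hY, ?_, ?_, ?_⟩
  · simp [Equiv.trans_apply, Equiv.swap_apply_right]
  · simp [Equiv.trans_apply, Equiv.swap_apply_left]
  · intro c hca hcb
    simp [Equiv.trans_apply, Equiv.swap_apply_of_ne_of_ne hca hcb]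

/-- Darts of `FS X Y` are in bijection with pairs `(σ, e)` where `e` is an edge of `X`
mapped by `σ` to an edge of `Y`. -/
noncomputable def dartEquiv (X Y : SimpleGraph (Fin n)) :
    (FS X Y).Dart ≃
      {p : (Fin n ≃ Fin n) × Sym2 (Fin n) // p.2 ∈ X.edgeSet ∧ Sym2.map p.1 p.2 ∈ Y.edgeSet} := by
  refine (Equiv.ofBijective
    (fun p => ⟨(p.1.1, (swapOf p.1.2).trans p.1.1), fs_adj_swap X Y _ _ p.2.1 p.2.2⟩ :
      {p : (Fin n ≃ Fin n) × Sym2 (Fin n) //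
        p.2 ∈ X.edgeSet ∧ Sym2.map p.1 p.2 ∈ Y.edgeSet} → (FS X Y).Dart) ⟨?_, ?_⟩).symm
  · rintro ⟨⟨σ, e⟩, he⟩ ⟨⟨σ', e'⟩, he'⟩ h
    simp only [SimpleGraph.Dart.ext_iff, Prod.mk.injEq] at h
    obtain ⟨h1, h2⟩ := h
    subst h1
    have hswap : swapOf e = swapOf e' := Equiv.ext fun x => σ.injective (by
      have := congrArg (fun f : Fin n ≃ Fin n => f x) h2
      simpa [Equiv.trans_apply] using this)
    have hd : ¬ e.IsDiag := SimpleGraph.not_isDiag_of_mem_edgeSet _ he.1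
    exact Subtype.ext (Prod.ext rfl (swapOf_inj hd hswap))
  · rintro ⟨⟨σ, τ⟩, a, b, hX, hY, h1, h2, h3⟩
    refine ⟨⟨(σ, s(a, b)), (SimpleGraph.mem_edgeSet X).mpr hX, ?_⟩, ?_⟩
    · rw [Sym2.map_pair_eq]; exact (SimpleGraph.mem_edgeSet Y).mpr hY
    · apply SimpleGraph.Dart.ext
      refine Prod.ext rfl (Equiv.ext fun x => ?_)
      simp only [Equiv.trans_apply, swapOf_mk]
      by_cases hxa : x = a
      · subst hxa; rw [Equiv.swap_apply_left]; exact h2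
      · by_cases hxb : x = b
        · subst hxb; rw [Equiv.swap_apply_right]; exact h1
        · rw [Equiv.swap_apply_of_ne_of_ne hxa hxb]; exact h3 x hxa hxb

lemma fiber_card (Y : SimpleGraph (Fin n)) [DecidableRel Y.Adj] (e : Sym2 (Fin n))
    (he : ¬ e.IsDiag) :
    Nat.card {σ : Fin n ≃ Fin n // Sym2.map σ e ∈ Y.edgeSet} =
      Fintype.card Y.Dart * Nat.factorial (n - 2) := by
  classical
  induction e using Sym2.ind with
  | _ a b =>
  have hab : a ≠ b := by simpa using he
  have E : {σ : Fin n ≃ Fin n // Sym2.map σ s(a, b) ∈ Y.edgeSet} ≃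
      Σ d : Y.Dart, {σ : Equiv.Perm (Fin n) // σ a = d.fst ∧ σ b = d.snd} :=
    { toFun := fun σ => ⟨⟨(σ.1 a, σ.1 b), by
        have := σ.2; rwa [Sym2.map_pair_eq, SimpleGraph.mem_edgeSet] at this⟩, σ.1, rfl, rfl⟩
      invFun := fun p => ⟨p.2.1, by
        rw [Sym2.map_pair_eq, p.2.2.1, p.2.2.2, SimpleGraph.mem_edgeSet]
        exact p.1.adj⟩
      left_inv := fun σ => rfl
      right_inv := by
        rintro ⟨⟨⟨y1, y2⟩, hadj⟩, σ, h1, h2⟩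
        dsimp at h1 h2
        subst h1; subst h2
        rfl }
  rw [Nat.card_congr E, Nat.card_eq_fintype_card, Fintype.card_sigma]
  have hconst : ∀ d : Y.Dart,
      Fintype.card {σ : Equiv.Perm (Fin n) // σ a = d.fst ∧ σ b = d.snd} =
        Nat.factorial (n - 2) := by
    intro d
    have := card_fix_two (α := Fin n) hab d.adj.ne
    rwa [Nat.card_eq_fintype_card, Fintype.card_fin] at this
  simp only [hconst, Finset.sum_const, Finset.card_univ, smul_eq_mul]

end FSCount

/-- For `n`-vertex graphs `X` and `Y`, the number of edges of `FS(X, Y)`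
equals `|E(X)| * |E(Y)| * (n - 2)!`. -/
theorem fs_edge_count (n : ℕ) (hn : 2 ≤ n) (X Y : SimpleGraph (Fin n)) :
    (FS X Y).edgeSet.ncard =
      X.edgeSet.ncard * Y.edgeSet.ncard * Nat.factorial (n - 2) := by
  classical
  -- convert ncard to Fintype card of edge finsets
  have hX : X.edgeSet.ncard = X.edgeFinset.card := by
    rw [← Nat.card_coe_set_eq, Nat.card_eq_fintype_card, ← Set.toFinset_card]
    congr 1
  have hY : Y.edgeSet.ncard = Y.edgeFinset.card := by
    rw [← Nat.card_coe_set_eq, Nat.card_eq_fintype_card, ← Set.toFinset_card]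
    congr 1
  have hFS : (FS X Y).edgeSet.ncard = (FS X Y).edgeFinset.card := by
    rw [← Nat.card_coe_set_eq, Nat.card_eq_fintype_card, ← Set.toFinset_card]
    congr 1
  -- count darts
  have hdart : Fintype.card (FS X Y).Dart = 2 * (FS X Y).edgeFinset.card :=
    SimpleGraph.dart_card_eq_twice_card_edges _
  have hdartY : Fintype.card Y.Dart = 2 * Y.edgeFinset.card :=
    SimpleGraph.dart_card_eq_twice_card_edges _
  -- the dart equivalence
  have key : Fintype.card (FS X Y).Dart =
      X.edgeFinset.card * (Fintype.card Y.Dart * Nat.factorial (n - 2)) := by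
    rw [← Nat.card_eq_fintype_card, Nat.card_congr (dartEquiv X Y)]
    have E : {p : (Fin n ≃ Fin n) × Sym2 (Fin n) //
        p.2 ∈ X.edgeSet ∧ Sym2.map p.1 p.2 ∈ Y.edgeSet} ≃
        Σ e : X.edgeSet, {σ : Fin n ≃ Fin n // Sym2.map σ e.1 ∈ Y.edgeSet} :=
      { toFun := fun p => ⟨⟨p.1.2, p.2.1⟩, p.1.1, p.2.2⟩
        invFun := fun q => ⟨(q.2.1, q.1.1), q.1.2, q.2.2⟩
        left_inv := fun p => rfl
        right_inv := fun q => rfl }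
    rw [Nat.card_congr E, Nat.card_eq_fintype_card, Fintype.card_sigma]
    have hconst : ∀ e : X.edgeSet,
        Fintype.card {σ : Fin n ≃ Fin n // Sym2.map σ e.1 ∈ Y.edgeSet} =
          Fintype.card Y.Dart * Nat.factorial (n - 2) := by
      intro e
      rw [← Nat.card_eq_fintype_card]
      exact fiber_card Y e.1 (SimpleGraph.not_isDiag_of_mem_edgeSet _ e.2)
    simp only [hconst, Finset.sum_const, Finset.card_univ, smul_eq_mul]
    congr 1
    rw [← Set.toFinset_card]
    convert rfl
    ext; simp
  rw [hdart, hdartY] at key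
  rw [hX, hY, hFS]
  have : 2 * (FS X Y).edgeFinset.card =
      2 * (X.edgeFinset.card * Y.edgeFinset.card * Nat.factorial (n - 2)) := by
    rw [key]; ring
  exact Nat.eq_of_mul_eq_mul_left (by norm_num) this
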